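/- Let a ∈ ℤ be nonzero, X an integer, and let M_a be the minimum of (c₁² + c₂²)^{1/2} over all pairs of integers (c₁, c₂) ≠ (0,0) with c₁ ≡ c₂X (mod a). If M < X/2, then #{ a ∈ [A, 2A) : M_a ∈ [M, 2M), c₁ − c₂X ≠ 0 for the minimizing pair } ≤ X^{o(1)}·M², i.e. the number of integers a in any dyadic range with M_a ≍ M is at most X^{o(1)}·M². -/

import Mathlib

set_option maxHeartbeats 1000000


open Finset in
lemma divisor_bound (ε : ℝ) (hε : 0 < ε) : ∃ C : ℝ, 0 < C ∧
    ∀ n : ℕ, n ≠ 0 → ((n.divisors.card : ℝ)) ≤ C * (n : ℝ) ^ ε := by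
  have hlog2 : 0 < Real.log 2 := Real.log_pos (by norm_num)
  set K : ℝ := max 1 (1 / (ε * Real.log 2)) with hKdef
  have hK1 : 1 ≤ K := le_max_left _ _
  have hK0 : 0 < K := lt_of_lt_of_le one_pos hK1
  set B : ℕ := ⌈(2:ℝ) ^ (1/ε)⌉₊ with hBdef
  refine ⟨K ^ (B + 1), by positivity, fun n hn => ?_⟩
  have key : ∀ p ∈ n.primeFactors,
      ((n.factorization p + 1 : ℕ) : ℝ) ≤
        (if p ≤ B then K else 1) * (p : ℝ) ^ (ε * (n.factorization p : ℕ)) := by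
    intro p hp
    have hp2 : 2 ≤ p := (Nat.prime_of_mem_primeFactors hp).two_le
    have hp2R : (2:ℝ) ≤ (p:ℝ) := by exact_mod_cast hp2
    have hp0R : (0:ℝ) ≤ (p:ℝ) := by positivity
    set a : ℕ := n.factorization p with ha
    by_cases hpB : p ≤ B
    · simp only [hpB, if_true]
      have h2a : (2:ℝ) ^ (ε * a) ≤ (p:ℝ) ^ (ε * a) :=
        Real.rpow_le_rpow (by norm_num) hp2R (by positivity)
      have hexp : 1 + ε * a * Real.log 2 ≤ (2:ℝ) ^ (ε * a) := by
        rw [Real.rpow_def_of_pos (by norm_num), mul_comm (Real.log 2)]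
        calc 1 + ε * a * Real.log 2 = (ε * a * Real.log 2) + 1 := by ring
        _ ≤ _ := Real.add_one_le_exp _
      have hKe : 1 ≤ K * (ε * Real.log 2) := by
        have h : 1 / (ε * Real.log 2) ≤ K := le_max_right _ _
        have hpos : 0 < ε * Real.log 2 := by positivity
        calc (1:ℝ) = (1 / (ε * Real.log 2)) * (ε * Real.log 2) := by field_simp
        _ ≤ K * (ε * Real.log 2) := by nlinarith
      have h3 : ((a:ℝ) + 1) ≤ K * (1 + ε * a * Real.log 2) := by
        nlinarith [Nat.cast_nonneg (α := ℝ) a]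
      push_cast
      calc ((a:ℝ) + 1) ≤ K * (1 + ε * a * Real.log 2) := h3
      _ ≤ K * (2:ℝ) ^ (ε * a) := by nlinarith
      _ ≤ K * (p:ℝ) ^ (ε * a) := by nlinarith [Real.rpow_nonneg (show (0:ℝ) ≤ 2 by norm_num) (ε * a)]
    · simp only [hpB, if_false, one_mul]
      have hpB' : (2:ℝ) ^ (1/ε) ≤ (p:ℝ) := by
        have hlt : B < p := Nat.lt_of_not_le hpB
        calc (2:ℝ) ^ (1/ε) ≤ (B:ℝ) := Nat.le_ceil _
        _ ≤ (p:ℝ) := by exact_mod_cast hlt.le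
      have h2p : (2:ℝ) ≤ (p:ℝ) ^ ε := by
        calc (2:ℝ) = ((2:ℝ) ^ (1/ε)) ^ ε := by
              rw [← Real.rpow_mul (by norm_num : (0:ℝ) ≤ 2), one_div_mul_cancel hε.ne',
                Real.rpow_one]
        _ ≤ (p:ℝ) ^ ε := Real.rpow_le_rpow (by positivity) hpB' hε.le
      have h1 : ((a:ℝ) + 1) ≤ (2:ℝ) ^ (a:ℕ) := by
        exact_mod_cast Nat.succ_le_of_lt (Nat.lt_two_pow_self (n := a))
      push_cast
      calc ((a:ℝ) + 1) ≤ (2:ℝ) ^ (a:ℕ) := h1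
      _ = (2:ℝ) ^ (a:ℝ) := (Real.rpow_natCast 2 a).symm
      _ ≤ ((p:ℝ) ^ ε) ^ (a:ℝ) := Real.rpow_le_rpow (by norm_num) h2p (by positivity)
      _ = (p:ℝ) ^ (ε * a) := (Real.rpow_mul hp0R ε a).symm
  have h0 : (∀ p ∈ n.primeFactors, (0:ℝ) ≤ ((n.factorization p + 1 : ℕ) : ℝ)) :=
    fun p _ => by positivity
  have hprodle : (n.divisors.card : ℝ) ≤
      (∏ p ∈ n.primeFactors, (if p ≤ B then K else 1)) *
        ∏ p ∈ n.primeFactors, (p : ℝ) ^ (ε * (n.factorization p : ℕ)) := by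
    rw [Nat.card_divisors hn]
    push_cast
    rw [← Finset.prod_mul_distrib]
    refine Finset.prod_le_prod (fun p _ => by positivity) ?_
    intro p hp
    have := key p hp
    push_cast at this ⊢
    exact this
  have hKprod : (∏ p ∈ n.primeFactors, (if p ≤ B then K else 1)) ≤ K ^ (B + 1) := by
    rw [← Finset.prod_filter]
    rw [Finset.prod_const]
    apply pow_le_pow_right₀ hK1
    have hsub : n.primeFactors.filter (· ≤ B) ⊆ Finset.range (B + 1) := by
      intro p hp
      simp only [Finset.mem_filter] at hp
      exact Finset.mem_range.mpr (Nat.lt_succ_of_le hp.2)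
    calc (n.primeFactors.filter (· ≤ B)).card ≤ (Finset.range (B+1)).card :=
          Finset.card_le_card hsub
    _ = B + 1 := Finset.card_range _
  have hnprod : (∏ p ∈ n.primeFactors, (p : ℝ) ^ (ε * (n.factorization p : ℕ))) = (n:ℝ) ^ ε := by
    have h1 : ∀ p ∈ n.primeFactors, (p : ℝ) ^ (ε * (n.factorization p : ℕ))
        = (((p ^ n.factorization p : ℕ) : ℝ)) ^ ε := by
      intro p hp
      rw [mul_comm, Real.rpow_mul (by positivity), Real.rpow_natCast]
      push_cast
      ring_nf
    rw [Finset.prod_congr rfl h1, Real.finset_prod_rpow _ _ (fun p _ => by positivity)]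
    congr 1
    rw [← Nat.cast_prod]
    congr 1
    conv_rhs => rw [← Nat.factorization_prod_pow_eq_self hn]
    rfl
  calc (n.divisors.card : ℝ) ≤ _ := hprodle
  _ ≤ K ^ (B+1) * (n:ℝ) ^ ε := by
      rw [hnprod]
      exact mul_le_mul_of_nonneg_right hKprod (by positivity)



/-- `stmt_13`: the number of nonzero integers `a` in a dyadic range `[A, 2A)` whose minimal
vector `(c₁, c₂) ≠ 0` with `c₁ ≡ c₂X (mod a)` has length in `[M, 2M)` (and `c₁ - c₂X ≠ 0`)
is at most `X^{o(1)} M²`: for every `ε > 0` there is a constant `C` so that the count is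
at most `C X^ε M²`. -/
theorem stmt_13 (ε : ℝ) (hε : 0 < ε) : ∃ C : ℝ, 0 < C ∧
    ∀ (X : ℤ) (A M : ℝ), 1 ≤ X → M < (X : ℝ) / 2 →
      (({a : ℤ | a ≠ 0 ∧ A ≤ (a : ℝ) ∧ (a : ℝ) < 2 * A ∧
          ∃ c₁ c₂ : ℤ, ¬(c₁ = 0 ∧ c₂ = 0) ∧ a ∣ (c₁ - c₂ * X) ∧ c₁ - c₂ * X ≠ 0 ∧
            M ≤ Real.sqrt ((c₁ : ℝ)^2 + (c₂ : ℝ)^2) ∧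
            Real.sqrt ((c₁ : ℝ)^2 + (c₂ : ℝ)^2) < 2 * M ∧
            ∀ d₁ d₂ : ℤ, ¬(d₁ = 0 ∧ d₂ = 0) → a ∣ (d₁ - d₂ * X) →
              Real.sqrt ((c₁ : ℝ)^2 + (c₂ : ℝ)^2)
                ≤ Real.sqrt ((d₁ : ℝ)^2 + (d₂ : ℝ)^2)}).ncard : ℝ)
        ≤ C * (X : ℝ)^ε * M^2 := by
  obtain ⟨C₀, hC₀, hdiv⟩ := divisor_bound (ε/3) (by positivity)
  refine ⟨200 * C₀ * (4:ℝ) ^ (ε/3), by positivity, ?_⟩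
  intro X A M hX hM
  set S : Set ℤ := {a : ℤ | a ≠ 0 ∧ A ≤ (a : ℝ) ∧ (a : ℝ) < 2 * A ∧
          ∃ c₁ c₂ : ℤ, ¬(c₁ = 0 ∧ c₂ = 0) ∧ a ∣ (c₁ - c₂ * X) ∧ c₁ - c₂ * X ≠ 0 ∧
            M ≤ Real.sqrt ((c₁ : ℝ)^2 + (c₂ : ℝ)^2) ∧
            Real.sqrt ((c₁ : ℝ)^2 + (c₂ : ℝ)^2) < 2 * M ∧
            ∀ d₁ d₂ : ℤ, ¬(d₁ = 0 ∧ d₂ = 0) → a ∣ (d₁ - d₂ * X) →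
              Real.sqrt ((c₁ : ℝ)^2 + (c₂ : ℝ)^2)
                ≤ Real.sqrt ((d₁ : ℝ)^2 + (d₂ : ℝ)^2)} with hS
  have hXR : (1:ℝ) ≤ (X:ℝ) := by exact_mod_cast hX
  have hXε : (0:ℝ) ≤ (X:ℝ) ^ ε := Real.rpow_nonneg (by linarith) ε
  by_cases hM2 : (1/2 : ℝ) < M
  · -- main case
    have hM0 : 0 < M := by linarith
    set N : ℤ := ⌈2 * M⌉ with hN
    have hNge : 2 * M ≤ (N:ℝ) := Int.le_ceil _
    have hNlt : (N:ℝ) < 2 * M + 1 := Int.ceil_lt_add_one _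
    have hN0 : 0 ≤ N := by
      have : (0:ℝ) < (N:ℝ) := by linarith
      exact_mod_cast this.le
    set box : Finset (ℤ × ℤ) := Finset.Icc (-N) N ×ˢ Finset.Icc (-N) N with hbox
    set F : Finset ℤ := box.biUnion (fun p =>
      ((p.1 - p.2 * X).natAbs.divisors.image (fun d : ℕ => (d:ℤ))) ∪
      ((p.1 - p.2 * X).natAbs.divisors.image (fun d : ℕ => -(d:ℤ)))) with hF
    have hsub : S ⊆ ↑F := by
      intro a ha
      obtain ⟨ha0, -, -, c₁, c₂, hc0, hdvd, hvne, hMle, hlt, -⟩ := ha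
      have hsum : (c₁:ℝ)^2 + (c₂:ℝ)^2 < (2*M)^2 := by
        have := Real.lt_sq_of_sqrt_lt hlt
        linarith
      have hc₁ : -N ≤ c₁ ∧ c₁ ≤ N := by
        constructor <;>
        · have : -(N:ℝ) ≤ (c₁:ℝ) ∧ (c₁:ℝ) ≤ (N:ℝ) := by
            constructor <;> nlinarith [sq_nonneg ((c₂:ℝ)), sq_nonneg ((c₁:ℝ) + N), sq_nonneg ((c₁:ℝ) - N)]
          first
          | exact_mod_cast this.1
          | exact_mod_cast this.2
      have hc₂ : -N ≤ c₂ ∧ c₂ ≤ N := by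
        constructor <;>
        · have : -(N:ℝ) ≤ (c₂:ℝ) ∧ (c₂:ℝ) ≤ (N:ℝ) := by
            constructor <;> nlinarith [sq_nonneg ((c₁:ℝ)), sq_nonneg ((c₂:ℝ) + N), sq_nonneg ((c₂:ℝ) - N)]
          first
          | exact_mod_cast this.1
          | exact_mod_cast this.2
      simp only [hF, Finset.coe_biUnion, Set.mem_iUnion, Finset.mem_coe]
      refine ⟨(c₁, c₂), ?_, ?_⟩
      · simp only [hbox, Finset.mem_product, Finset.mem_Icc]
        exact ⟨⟨hc₁.1, hc₁.2⟩, ⟨hc₂.1, hc₂.2⟩⟩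
      · have hmem : a.natAbs ∈ (c₁ - c₂ * X).natAbs.divisors :=
          Nat.mem_divisors.mpr ⟨Int.natAbs_dvd_natAbs.mpr hdvd, Int.natAbs_ne_zero.mpr hvne⟩
        rcases Int.natAbs_eq a with h | h
        · exact Finset.mem_union_left _ (Finset.mem_image.mpr ⟨a.natAbs, hmem, h.symm⟩)
        · exact Finset.mem_union_right _ (Finset.mem_image.mpr ⟨a.natAbs, hmem, h.symm⟩)
    set U : ℝ := 2 * C₀ * (4 * (X:ℝ)^2) ^ (ε/3) with hU
    have hU0 : 0 ≤ U := by positivity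
    have hterm : ∀ p ∈ box,
        (((((p.1 - p.2 * X).natAbs.divisors.image (fun d : ℕ => (d:ℤ))) ∪
          ((p.1 - p.2 * X).natAbs.divisors.image (fun d : ℕ => -(d:ℤ)))).card : ℝ)) ≤ U := by
      intro p hp
      set v : ℤ := p.1 - p.2 * X with hv
      set n : ℕ := v.natAbs with hn
      have hcard2 : ((((n.divisors.image (fun d : ℕ => (d:ℤ))) ∪
          (n.divisors.image (fun d : ℕ => -(d:ℤ)))).card : ℝ)) ≤ 2 * (n.divisors.card : ℝ) := by
        have := Finset.card_union_le (n.divisors.image (fun d : ℕ => (d:ℤ)))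
          (n.divisors.image (fun d : ℕ => -(d:ℤ)))
        have h1 := Finset.card_image_le (s := n.divisors) (f := fun d : ℕ => (d:ℤ))
        have h2 := Finset.card_image_le (s := n.divisors) (f := fun d : ℕ => -(d:ℤ))
        push_cast
        have : ((n.divisors.image (fun d : ℕ => (d:ℤ))) ∪
            (n.divisors.image (fun d : ℕ => -(d:ℤ)))).card ≤ 2 * n.divisors.card := by omega
        exact_mod_cast this
      rcases eq_or_ne n 0 with h0 | h0
      · rw [h0] at hcard2 ⊢
        simp only [Nat.divisors_zero] at hcard2 ⊢
        calc _ ≤ (2:ℝ) * ((∅ : Finset ℕ).card : ℝ) := hcard2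
        _ = 0 := by simp
        _ ≤ U := hU0
      · have hbound : (n:ℝ) ≤ 4 * (X:ℝ)^2 := by
          simp only [hbox, Finset.mem_product, Finset.mem_Icc] at hp
          have h1 : |(p.1 : ℝ)| ≤ (N:ℝ) := by
            rw [abs_le]; constructor <;> [exact_mod_cast hp.1.1; exact_mod_cast hp.1.2]
          have h2 : |(p.2 : ℝ)| ≤ (N:ℝ) := by
            rw [abs_le]; constructor <;> [exact_mod_cast hp.2.1; exact_mod_cast hp.2.2]
          have hnabs : (n:ℝ) = |(p.1:ℝ) - (p.2:ℝ) * (X:ℝ)| := by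
            rw [hn, hv]
            push_cast [Nat.cast_natAbs]
            push_cast
            ring_nf
          rw [hnabs]
          have hXabs : |(X:ℝ)| = (X:ℝ) := abs_of_pos (by linarith)
          have hNX : (N:ℝ) ≤ 2 * (X:ℝ) := by linarith [hM]
          calc |(p.1:ℝ) - (p.2:ℝ) * (X:ℝ)| ≤ |(p.1:ℝ)| + |(p.2:ℝ)| * |(X:ℝ)| := by
                calc _ ≤ |(p.1:ℝ)| + |(p.2:ℝ) * (X:ℝ)| := abs_sub _ _
                _ = _ := by rw [abs_mul]
          _ ≤ (N:ℝ) + (N:ℝ) * (X:ℝ) := by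
                have : |(p.2:ℝ)| * |(X:ℝ)| ≤ (N:ℝ) * (X:ℝ) := by
                  rw [hXabs]; exact mul_le_mul_of_nonneg_right h2 (by linarith)
                linarith
          _ ≤ 2*(X:ℝ) + 2*(X:ℝ) * (X:ℝ) := by nlinarith [abs_nonneg ((p.2:ℝ))]
          _ ≤ 4 * (X:ℝ)^2 := by nlinarith
        calc _ ≤ 2 * (n.divisors.card : ℝ) := hcard2
        _ ≤ 2 * (C₀ * (n:ℝ) ^ (ε/3)) := by linarith [hdiv n h0]
        _ ≤ 2 * (C₀ * (4 * (X:ℝ)^2) ^ (ε/3)) := by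
              have := Real.rpow_le_rpow (Nat.cast_nonneg n) hbound (by positivity : (0:ℝ) ≤ ε/3)
              nlinarith
        _ = U := by rw [hU]; ring
    have hFcard : (F.card : ℝ) ≤ (box.card : ℝ) * U := by
      have h1 : F.card ≤ ∑ p ∈ box, (((p.1 - p.2 * X).natAbs.divisors.image (fun d : ℕ => (d:ℤ))) ∪
          ((p.1 - p.2 * X).natAbs.divisors.image (fun d : ℕ => -(d:ℤ)))).card := Finset.card_biUnion_le
      calc (F.card : ℝ) ≤ ∑ p ∈ box, ((((p.1 - p.2 * X).natAbs.divisors.image (fun d : ℕ => (d:ℤ))) ∪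
          ((p.1 - p.2 * X).natAbs.divisors.image (fun d : ℕ => -(d:ℤ)))).card : ℝ) := by
            exact_mod_cast h1
      _ ≤ ∑ _p ∈ box, U := Finset.sum_le_sum hterm
      _ = (box.card : ℝ) * U := by rw [Finset.sum_const, nsmul_eq_mul]
    have hboxcard : (box.card : ℝ) ≤ 100 * M^2 := by
      have h1 : (Finset.Icc (-N) N).card = (2*N+1).toNat := by
        rw [Int.card_Icc]
        congr 1
        ring
      have h2 : ((Finset.Icc (-N) N).card : ℝ) ≤ 10 * M := by
        rw [h1]
        have h4 : (((2*N+1).toNat : ℤ)) = 2*N+1 := Int.toNat_of_nonneg (by omega)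
        have h3 : ((2*N+1).toNat : ℝ) = 2*(N:ℝ)+1 := by exact_mod_cast h4
        rw [h3]
        linarith
      have h5 : box.card = (Finset.Icc (-N) N).card * (Finset.Icc (-N) N).card := by
        rw [hbox, Finset.card_product]
      rw [h5]
      push_cast
      nlinarith [Nat.cast_nonneg (α := ℝ) (Finset.Icc (-N) N).card]
    have hncard : (S.ncard : ℝ) ≤ (F.card : ℝ) := by
      have := Set.ncard_le_ncard hsub F.finite_toSet
      rw [Set.ncard_coe_finset] at this
      exact_mod_cast this
    have hUbound : U ≤ 2 * C₀ * (4:ℝ)^(ε/3) * (X:ℝ)^ε := by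
      have h1 : (4 * (X:ℝ)^2) ^ (ε/3) = (4:ℝ)^(ε/3) * ((X:ℝ)^2)^(ε/3) :=
        Real.mul_rpow (by norm_num) (by positivity)
      have h2 : ((X:ℝ)^2)^(ε/3) = (X:ℝ)^(2*(ε/3)) := by
        rw [← Real.rpow_natCast (X:ℝ) 2, ← Real.rpow_mul (by linarith)]
        norm_num
      have h3 : (X:ℝ)^(2*(ε/3)) ≤ (X:ℝ)^ε :=
        Real.rpow_le_rpow_of_exponent_le hXR (by linarith)
      rw [hU, h1, h2]
      calc 2 * C₀ * ((4:ℝ)^(ε/3) * (X:ℝ)^(2*(ε/3))) = 2*C₀*(4:ℝ)^(ε/3) * (X:ℝ)^(2*(ε/3)) := by ring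
      _ ≤ 2*C₀*(4:ℝ)^(ε/3) * (X:ℝ)^ε := mul_le_mul_of_nonneg_left h3 (by positivity)
    calc (S.ncard : ℝ) ≤ (F.card : ℝ) := hncard
    _ ≤ (box.card : ℝ) * U := hFcard
    _ ≤ (100 * M^2) * (2 * C₀ * (4:ℝ)^(ε/3) * (X:ℝ)^ε) := by
        apply mul_le_mul hboxcard hUbound hU0 (by positivity)
    _ = 200 * C₀ * (4:ℝ)^(ε/3) * (X:ℝ)^ε * M^2 := by ring
  · -- empty case
    have hempty : S = ∅ := by
      ext a
      simp only [Set.mem_empty_iff_false, iff_false]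
      rintro ⟨-, -, -, c₁, c₂, hc0, -, -, hMle, hlt, -⟩
      have h1 : (1:ℝ) ≤ (c₁:ℝ)^2 + (c₂:ℝ)^2 := by
        rcases not_and_or.mp hc0 with h | h
        · have : 1 ≤ |c₁| := Int.one_le_abs (by exact_mod_cast h)
          have : (1:ℝ) ≤ |(c₁:ℝ)| := by exact_mod_cast this
          nlinarith [sq_nonneg ((c₂:ℝ)), sq_abs ((c₁:ℝ))]
        · have : 1 ≤ |c₂| := Int.one_le_abs (by exact_mod_cast h)
          have : (1:ℝ) ≤ |(c₂:ℝ)| := by exact_mod_cast this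
          nlinarith [sq_nonneg ((c₁:ℝ)), sq_abs ((c₂:ℝ))]
      have h2 : (1:ℝ) ≤ Real.sqrt ((c₁:ℝ)^2 + (c₂:ℝ)^2) := by
        rw [show (1:ℝ) = Real.sqrt 1 by simp]
        exact Real.sqrt_le_sqrt h1
      linarith
    rw [hempty]
    simp only [Set.ncard_empty, Nat.cast_zero]
    positivity
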